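/- Let t > 0 and F(x) = |x| + (x − t)²/(2t). Then (∫_{−∞}^0 exp(−F(x)/T) dx) / (∫_ℝ exp(−F(x)/T) dx) → 0 as T → 0⁺; that is, P(X_T(t,t) < 0) → 0 as T → 0⁺. -/

import Mathlib

open Filter MeasureTheory

/-- The one-dimensional objective `F(x) = |x| + (x − y)²/(2t)`. -/
noncomputable def obj1 (y t x : ℝ) : ℝ := |x| + (x - y) ^ 2 / (2 * t)

lemma obj1_integrable (t T : ℝ) (ht : 0 < t) (hT : 0 < T) :
    Integrable (fun x : ℝ => Real.exp (-(obj1 t t x) / T)) := by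
  have hb : 0 < (2 * t * T)⁻¹ := by positivity
  have hg : Integrable (fun x : ℝ => Real.exp (-(2 * t * T)⁻¹ * (x - t) ^ 2)) :=
    (integrable_exp_neg_mul_sq hb).comp_sub_right t
  have hcont : Continuous (fun x : ℝ => Real.exp (-(obj1 t t x) / T)) := by
    unfold obj1; fun_prop
  refine hg.mono' hcont.aestronglyMeasurable (Filter.Eventually.of_forall fun x => ?_)
  rw [Real.norm_eq_abs, abs_of_pos (Real.exp_pos _), Real.exp_le_exp, neg_mul, neg_div,
    neg_le_neg_iff]
  have key : (2 * t * T)⁻¹ * (x - t) ^ 2 * T = (x - t) ^ 2 / (2 * t) := by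
    field_simp
  rw [le_div_iff₀ hT, key]
  unfold obj1
  have := abs_nonneg x
  linarith

/-- For `y = t`, `P(X_T(t,t) < 0) → 0` as `T → 0⁺`. -/
theorem stmt13 (t : ℝ) (ht : 0 < t) :
    Tendsto
      (fun T : ℝ =>
        (∫ x in Set.Iic (0 : ℝ), Real.exp (-(obj1 t t x) / T)) /
          ∫ x : ℝ, Real.exp (-(obj1 t t x) / T))
      (nhdsWithin 0 (Set.Ioi 0)) (nhds 0) := by
  set g : ℝ → ℝ := fun T => Real.exp (1 / (2 * t)) * Real.sqrt T with hg
  have hgt : Tendsto g (nhdsWithin 0 (Set.Ioi 0)) (nhds 0) := by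
    have h1 : Tendsto Real.sqrt (nhdsWithin (0 : ℝ) (Set.Ioi 0)) (nhds 0) :=
      (Real.continuous_sqrt.tendsto' 0 0 Real.sqrt_zero).mono_left nhdsWithin_le_nhds
    simpa only [mul_zero] using h1.const_mul (Real.exp (1 / (2 * t)))
  refine squeeze_zero' ?_ ?_ hgt
  · filter_upwards [self_mem_nhdsWithin] with T hT
    exact div_nonneg (integral_nonneg fun x => (Real.exp_pos _).le)
      (integral_nonneg fun x => (Real.exp_pos _).le)
  · filter_upwards [self_mem_nhdsWithin] with T hTmem
    have hT : (0 : ℝ) < T := hTmem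
    set f : ℝ → ℝ := fun x => Real.exp (-(obj1 t t x) / T) with hf
    have hfint : Integrable f := obj1_integrable t T ht hT
    set A : ℝ := Real.exp (-(t / (2 * T))) with hA
    set E : ℝ := Real.exp (-(1 / (2 * t))) with hE
    -- numerator bound
    have hnum : (∫ x in Set.Iic (0 : ℝ), f x) ≤ A * T := by
      have h1 : (∫ x in Set.Ioi (0 : ℝ), f (-x)) = ∫ x in Set.Iic (0 : ℝ), f x := by
        simpa using integral_comp_neg_Ioi (c := 0) f
      have h2 : (∫ x in Set.Ioi (0 : ℝ), f (-x))
          ≤ ∫ x in Set.Ioi (0 : ℝ), A * Real.exp (-(T⁻¹ * x)) := by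
        refine setIntegral_mono_on (hfint.comp_neg.integrableOn) ?_ measurableSet_Ioi ?_
        · simpa [neg_mul, IntegrableOn] using ((exp_neg_integrableOn_Ioi 0 (inv_pos.2 hT)).const_mul A)
        · intro x hx
          have hx : 0 < x := hx
          have hobj : t / 2 + x ≤ obj1 t t (-x) := by
            unfold obj1
            rw [abs_of_nonpos (by linarith : -x ≤ 0), neg_neg]
            have h' : t / 2 ≤ (-x - t) ^ 2 / (2 * t) := by
              rw [le_div_iff₀ (by positivity : (0 : ℝ) < 2 * t)]
              nlinarith
            linarith
          have hle : -(obj1 t t (-x)) / T ≤ -(t / (2 * T)) + -(T⁻¹ * x) := by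
            have heq : -(t / (2 * T)) + -(T⁻¹ * x) = -((t / 2 + x) / T) := by
              field_simp
              ring
            rw [heq, neg_div, neg_le_neg_iff]
            gcongr
          calc f (-x) = Real.exp (-(obj1 t t (-x)) / T) := rfl
            _ ≤ Real.exp (-(t / (2 * T)) + -(T⁻¹ * x)) := Real.exp_le_exp.2 hle
            _ = A * Real.exp (-(T⁻¹ * x)) := by rw [Real.exp_add]
      have h3 : (∫ x in Set.Ioi (0 : ℝ), A * Real.exp (-(T⁻¹ * x))) = A * T := by
        rw [integral_const_mul]
        have h4 := integral_comp_mul_left_Ioi (fun x => Real.exp (-x)) 0 (inv_pos.2 hT)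
        simp only [mul_zero, smul_eq_mul, inv_inv] at h4
        rw [h4, integral_exp_neg_Ioi_zero, mul_one]
      linarith [h1 ▸ (h2.trans_eq h3)]
    -- denominator bound
    have hden : A * E * Real.sqrt T ≤ ∫ x : ℝ, f x := by
      have hc : ∀ x ∈ Set.Icc (0 : ℝ) (Real.sqrt T), A * E ≤ f x := by
        intro x hx
        obtain ⟨hx0, hx1⟩ := hx
        have hx2 : x ^ 2 ≤ T := by
          nlinarith [Real.sq_sqrt hT.le, Real.sqrt_nonneg T]
        have hobj : obj1 t t x ≤ t / 2 + T / (2 * t) := by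
          unfold obj1
          rw [abs_of_nonneg hx0]
          have heq : x + (x - t) ^ 2 / (2 * t) = t / 2 + x ^ 2 / (2 * t) := by
            field_simp
            ring
          rw [heq]
          have : x ^ 2 / (2 * t) ≤ T / (2 * t) := by gcongr
          linarith
        have hle : -(t / (2 * T)) + -(1 / (2 * t)) ≤ -(obj1 t t x) / T := by
          have heq : -(t / (2 * T)) + -(1 / (2 * t)) = -((t / 2 + T / (2 * t)) / T) := by
            field_simp
            ring
          rw [heq, neg_div, neg_le_neg_iff]
          gcongr
        calc A * E = Real.exp (-(t / (2 * T)) + -(1 / (2 * t))) := (Real.exp_add _ _).symm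
          _ ≤ f x := Real.exp_le_exp.2 hle
      have h4 : A * E * (volume (Set.Icc (0 : ℝ) (Real.sqrt T))).toReal
          ≤ ∫ x in Set.Icc (0 : ℝ) (Real.sqrt T), f x :=
        setIntegral_ge_of_const_le_real measurableSet_Icc
          (by simp [Real.volume_Icc]) hc hfint.integrableOn
      have h5 : (volume (Set.Icc (0 : ℝ) (Real.sqrt T))).toReal = Real.sqrt T := by
        simp [Real.volume_Icc, Real.sqrt_nonneg]
      have h6 : (∫ x in Set.Icc (0 : ℝ) (Real.sqrt T), f x) ≤ ∫ x : ℝ, f x :=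
        setIntegral_le_integral hfint (Filter.Eventually.of_forall fun x => (Real.exp_pos _).le)
      rw [h5] at h4
      linarith
    -- combine
    have hApos : 0 < A := Real.exp_pos _
    have hEpos : 0 < E := Real.exp_pos _
    have hsT : 0 < Real.sqrt T := Real.sqrt_pos.2 hT
    have hdpos : 0 < A * E * Real.sqrt T := by positivity
    have hstep : (∫ x in Set.Iic (0 : ℝ), f x) / (∫ x : ℝ, f x)
        ≤ (A * T) / (A * E * Real.sqrt T) :=
      div_le_div₀ (by positivity) hnum hdpos hden
    refine hstep.trans_eq ?_
    have hTT : Real.sqrt T * Real.sqrt T = T := Real.mul_self_sqrt hT.le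
    have hcE : E * Real.exp (1 / (2 * t)) = 1 := by
      rw [hE, ← Real.exp_add]
      norm_num
    have key : Real.exp (1 / (2 * t)) * Real.sqrt T * (A * E * Real.sqrt T) = A * T := by
      linear_combination A * Real.exp (1 / (2 * t)) * E * hTT + A * T * hcE
    show (A * T) / (A * E * Real.sqrt T) = Real.exp (1 / (2 * t)) * Real.sqrt T
    rw [div_eq_iff hdpos.ne']
    exact key.symm
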